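/- Let F be a finite field, let d ≥ 1 be an integer, let γ ∈ (0, 1/2), and let r ≥ 1, t ≥ 1 be integers with t ≤ γ²d². For each k ∈ {1,…,t}, let v₁^{(k)}, …, v_{s_k}^{(k)} ∈ F^d be linearly independent vectors, and set s = max_k s_k; assume s + r ≤ γd. Let w₁, …, w_r be independent random vectors, where each w_i is uniformly distributed on a set S_i ⊆ F^d with |S_i| ≥ |F|^{(1−γ)d}. Then the probability that, for every k ∈ {1,…,t}, the vectors v₁^{(k)}, …, v_{s_k}^{(k)}, w₁, …, w_r are linearly independent is at least 1 − γ³d³ / |F|^{(1−2γ)d}. -/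

import Mathlib

open Finset
open scoped Classical

private lemma aux_dep {F V : Type} [Field F] [AddCommGroup V] [Module F V]
    {n : ℕ} {ι : Type} [Fintype ι] {v : Fin n → V} {w : ι → V}
    (hv : LinearIndependent F v) (h : ¬ LinearIndependent F (Sum.elim v w)) :
    ∃ i, w i ∈ Submodule.span F (Set.range v ∪ w '' {j | j ≠ i}) := by
  classical
  rw [Fintype.not_linearIndependent_iff] at h
  obtain ⟨g, hg0, hex⟩ := h
  have hex' : ∃ i, g (Sum.inr i) ≠ 0 := by
    by_contra h'
    push_neg at h'
    have hsum : ∑ a, g (Sum.inl a) • v a = 0 := by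
      rw [Fintype.sum_sum_type] at hg0
      simpa [h'] using hg0
    have hz := Fintype.linearIndependent_iff.mp hv (fun a => g (Sum.inl a)) hsum
    obtain ⟨j, hj⟩ := hex
    cases j with
    | inl a => exact hj (hz a)
    | inr b => exact hj (h' b)
  obtain ⟨i, hi⟩ := hex'
  refine ⟨i, ?_⟩
  set W := Submodule.span F (Set.range v ∪ w '' {j | j ≠ i}) with hW
  have hmem : ∀ x : Fin n ⊕ ι, x ≠ Sum.inr i → Sum.elim v w x ∈ W := by
    rintro (a | b) hx
    · exact Submodule.subset_span (Or.inl ⟨a, rfl⟩)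
    · refine Submodule.subset_span (Or.inr ⟨b, ?_, rfl⟩)
      intro hb; exact hx (by rw [hb])
  have h1 : g (Sum.inr i) • w i
      = -∑ x ∈ Finset.univ.erase (Sum.inr i), g x • Sum.elim v w x := by
    have h2 := Finset.add_sum_erase Finset.univ (fun x => g x • Sum.elim v w x)
      (Finset.mem_univ (Sum.inr i))
    rw [hg0] at h2
    simpa using eq_neg_of_add_eq_zero_left h2
  have h2 : g (Sum.inr i) • w i ∈ W := by
    rw [h1]
    exact Submodule.neg_mem _ (Submodule.sum_mem _ fun x hx =>
      Submodule.smul_mem _ _ (hmem x (Finset.ne_of_mem_erase hx)))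
  have h3 := Submodule.smul_mem W (g (Sum.inr i))⁻¹ h2
  rwa [inv_smul_smul₀ hi] at h3

private lemma aux_count {F : Type} [Field F] [Fintype F] {d r n : ℕ}
    (v : Fin n → (Fin d → F)) (S : Fin r → Finset (Fin d → F)) (i : Fin r)
    (hSne : (S i).Nonempty) :
    (((Fintype.piFinset S).filter fun w =>
        w i ∈ Submodule.span F (Set.range v ∪ w '' {j | j ≠ i})).card)
      ≤ Fintype.card F ^ (n + (r - 1)) * ∏ j ∈ Finset.univ.erase i, (S j).card := by
  classical
  obtain ⟨x₀, hx₀⟩ := hSne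
  set T := (Fintype.piFinset S).filter fun w =>
      w i ∈ Submodule.span F (Set.range v ∪ w '' {j | j ≠ i}) with hT
  set t' : Finset (Fin r → Fin d → F) :=
      Fintype.piFinset (fun j => if j = i then {x₀} else S j) with ht'
  have hmaps : ∀ w ∈ T, (Function.update w i x₀) ∈ t' := by
    intro w hw
    rw [hT, Finset.mem_filter] at hw
    rw [ht', Fintype.mem_piFinset]
    intro j
    by_cases hj : j = i
    · subst hj; simp [Function.update_self]
    · simp [Function.update_of_ne hj, hj, Fintype.mem_piFinset.mp hw.1 j]
  have hcard_t' : t'.card = ∏ j ∈ Finset.univ.erase i, (S j).card := by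
    rw [ht', Fintype.card_piFinset]
    rw [← Finset.mul_prod_erase Finset.univ _ (Finset.mem_univ i)]
    have h1 : #(if i = i then ({x₀} : Finset (Fin d → F)) else S i) = 1 := by simp
    rw [h1, one_mul]
    exact Finset.prod_congr rfl fun j hj => by
      rw [if_neg (Finset.ne_of_mem_erase hj)]
  have hfiber : ∀ u ∈ t',
      (T.filter fun w => Function.update w i x₀ = u).card
        ≤ Fintype.card F ^ (n + (r - 1)) := by
    intro u _
    set W := Submodule.span F (Set.range v ∪ u '' {j | j ≠ i}) with hWdef
    have hsub : (T.filter fun w => Function.update w i x₀ = u).card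
        ≤ ((W : Set (Fin d → F)).toFinset).card := by
      apply Finset.card_le_card_of_injOn (fun w => w i)
      · intro w hw
        rw [Finset.mem_coe, Finset.mem_filter] at hw
        obtain ⟨hw1, hw2⟩ := hw
        rw [hT, Finset.mem_filter] at hw1
        have hagree : ∀ j, j ≠ i → w j = u j := by
          intro j hj
          rw [← hw2, Function.update_of_ne hj]
        have himg : w '' {j | j ≠ i} = u '' {j | j ≠ i} := by
          ext x
          constructor
          · rintro ⟨j, hj, rfl⟩; exact ⟨j, hj, (hagree j hj).symm⟩
          · rintro ⟨j, hj, rfl⟩; exact ⟨j, hj, hagree j hj⟩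
        rw [Finset.mem_coe, Set.mem_toFinset]
        have := hw1.2
        rwa [himg] at this
      · intro w hw w' hw' hww'
        rw [Finset.mem_coe, Finset.mem_filter] at hw hw'
        funext j
        by_cases hj : j = i
        · subst hj; exact hww'
        · rw [← Function.update_of_ne hj x₀ w, ← Function.update_of_ne hj x₀ w',
            hw.2, hw'.2]
    refine hsub.trans ?_
    rw [Set.toFinset_card]
    have hcardW : Fintype.card W = Fintype.card F ^ (Module.finrank F W) :=
      Module.card_eq_pow_finrank
    have hrange : (Set.range v ∪ u '' {j | j ≠ i})
        = Set.range (Sum.elim v (fun j : {j : Fin r // j ≠ i} => u j)) := by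
      rw [Set.Sum.elim_range]
      congr 1
      rw [Set.image_eq_range]
      rfl
    have hfr : Module.finrank F W ≤ n + (r - 1) := by
      rw [hWdef, hrange]
      refine (finrank_range_le_card _).trans ?_
      rw [Fintype.card_sum, Fintype.card_fin]
      have : Fintype.card {j : Fin r // j ≠ i} = r - 1 := by
        simp [Fintype.card_subtype_compl]
      omega
    calc Fintype.card (W : Set (Fin d → F)) = Fintype.card W := rfl
      _ = Fintype.card F ^ (Module.finrank F W) := hcardW
      _ ≤ Fintype.card F ^ (n + (r - 1)) :=
          Nat.pow_le_pow_right Fintype.card_pos hfr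
  calc T.card ≤ Fintype.card F ^ (n + (r - 1)) * t'.card :=
        Finset.card_le_mul_card_image_of_maps_to hmaps _ hfiber
    _ = _ := by rw [hcard_t']

/-- If in each of `t ≤ γ²d²` groups the given vectors are linearly independent, and
`w₁, …, w_r` are independent uniform samples from large subsets `Sᵢ ⊆ F^d`, then with
probability at least `1 - γ³d³/|F|^{(1-2γ)d}` every group stays linearly independent after
adjoining all the `wᵢ`.  Probability is expressed as (favorable count)/(total count). -/
theorem stmt4 {F : Type} [Field F] [Fintype F]
    {d : ℕ} (hd : 1 ≤ d) {γ : ℝ} (hγ0 : 0 < γ) (hγ : γ < 1 / 2)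
    {r t : ℕ} (hr : 1 ≤ r) (ht1 : 1 ≤ t) (ht : (t : ℝ) ≤ γ ^ 2 * (d : ℝ) ^ 2)
    (s : Fin t → ℕ) (v : (k : Fin t) → Fin (s k) → (Fin d → F))
    (hv : ∀ k, LinearIndependent F (v k))
    (hs : ∀ k, (s k : ℝ) + (r : ℝ) ≤ γ * (d : ℝ))
    (S : Fin r → Finset (Fin d → F))
    (hS : ∀ i, (Fintype.card F : ℝ) ^ ((1 - γ) * (d : ℝ)) ≤ ((S i).card : ℝ)) :
    1 - γ ^ 3 * (d : ℝ) ^ 3 / (Fintype.card F : ℝ) ^ ((1 - 2 * γ) * (d : ℝ)) ≤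
      (((Fintype.piFinset S).filter fun w : Fin r → Fin d → F =>
          ∀ k, LinearIndependent F (Sum.elim (v k) w)).card : ℝ) /
        ∏ i, ((S i).card : ℝ) := by
  classical
  have hq1 : (1 : ℝ) < (Fintype.card F : ℝ) := by exact_mod_cast Fintype.one_lt_card
  have hq0 : (0 : ℝ) < (Fintype.card F : ℝ) := by linarith
  have hSpos : ∀ i, (0 : ℝ) < ((S i).card : ℝ) := fun i =>
    lt_of_lt_of_le (Real.rpow_pos_of_pos hq0 _) (hS i)
  have hSne : ∀ i, (S i).Nonempty := fun i =>
    Finset.card_pos.mp (by exact_mod_cast hSpos i)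
  set P := Fintype.piFinset S with hP
  have hNpos : (0 : ℝ) < ∏ i, ((S i).card : ℝ) := Finset.prod_pos fun i _ => hSpos i
  rw [le_div_iff₀ hNpos]
  set Good := P.filter
    (fun w : Fin r → Fin d → F => ∀ k, LinearIndependent F (Sum.elim (v k) w)) with hGoodDef
  set Bad := P.filter
    (fun w : Fin r → Fin d → F => ¬ ∀ k, LinearIndependent F (Sum.elim (v k) w)) with hBadDef
  have hsplit : Good.card + Bad.card = P.card :=
    Finset.card_filter_add_card_filter_not _
  have hPcard : P.card = ∏ i, (S i).card := Fintype.card_piFinset S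
  -- the bad sets
  set C : Fin t → Fin r → Finset (Fin r → Fin d → F) := fun k i =>
    P.filter (fun w => w i ∈ Submodule.span F (Set.range (v k) ∪ w '' {j | j ≠ i})) with hC
  have hBadsub : Bad ⊆ Finset.univ.biUnion
      fun k => Finset.univ.biUnion fun i => C k i := by
    intro w hw
    rw [hBadDef, Finset.mem_filter] at hw
    obtain ⟨hwP, hwbad⟩ := hw
    push_neg at hwbad
    obtain ⟨k, hk⟩ := hwbad
    obtain ⟨i, hi⟩ := aux_dep (hv k) hk
    refine Finset.mem_biUnion.mpr ⟨k, Finset.mem_univ _,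
      Finset.mem_biUnion.mpr ⟨i, Finset.mem_univ _, ?_⟩⟩
    rw [hC, Finset.mem_filter]
    exact ⟨hwP, hi⟩
  have hBadcard : Bad.card ≤ ∑ k, ∑ i, (C k i).card := by
    calc Bad.card ≤ _ := Finset.card_le_card hBadsub
      _ ≤ ∑ k, (Finset.univ.biUnion fun i => C k i).card := Finset.card_biUnion_le
      _ ≤ ∑ k, ∑ i, (C k i).card :=
          Finset.sum_le_sum fun k _ => Finset.card_biUnion_le
  -- per-term bound
  have hd0 : (0 : ℝ) < (d : ℝ) := by exact_mod_cast hd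
  have hterm : ∀ (k : Fin t) (i : Fin r), ((C k i).card : ℝ) ≤
      (Fintype.card F : ℝ) ^ ((2 * γ - 1) * (d : ℝ)) * ∏ j, ((S j).card : ℝ) := by
    intro k i
    have h1 := aux_count (v k) S i (hSne i)
    have h2 : ((C k i).card : ℝ) ≤ ((Fintype.card F : ℝ) ^ (s k + (r - 1) : ℕ)) *
        ∏ j ∈ Finset.univ.erase i, ((S j).card : ℝ) := by
      have := h1
      push_cast
      exact_mod_cast h1
    have hc : ((s k + (r - 1) : ℕ) : ℝ) ≤ γ * d := by
      have h3 := hs k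
      have h4 : (1 : ℝ) ≤ (r : ℝ) := by exact_mod_cast hr
      push_cast [Nat.cast_sub hr]
      linarith
    have h4 : ((Fintype.card F : ℝ) ^ (s k + (r - 1) : ℕ))
        ≤ (Fintype.card F : ℝ) ^ (γ * (d : ℝ)) := by
      rw [← Real.rpow_natCast]
      exact Real.rpow_le_rpow_of_exponent_le hq1.le hc
    have h5 : (Fintype.card F : ℝ) ^ (γ * (d : ℝ))
        = (Fintype.card F : ℝ) ^ ((2 * γ - 1) * (d : ℝ)) *
          (Fintype.card F : ℝ) ^ ((1 - γ) * (d : ℝ)) := by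
      rw [← Real.rpow_add hq0]
      ring_nf
    have h6 := hS i
    have hprodpos : (0 : ℝ) ≤ ∏ j ∈ Finset.univ.erase i, ((S j).card : ℝ) :=
      Finset.prod_nonneg fun j _ => (hSpos j).le
    have h7 : ((C k i).card : ℝ) ≤ (Fintype.card F : ℝ) ^ ((2 * γ - 1) * (d : ℝ)) *
        (((S i).card : ℝ) * ∏ j ∈ Finset.univ.erase i, ((S j).card : ℝ)) := by
      have hb : (0 : ℝ) < (Fintype.card F : ℝ) ^ ((2 * γ - 1) * (d : ℝ)) :=
        Real.rpow_pos_of_pos hq0 _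
      calc ((C k i).card : ℝ)
          ≤ ((Fintype.card F : ℝ) ^ (s k + (r - 1) : ℕ)) *
            ∏ j ∈ Finset.univ.erase i, ((S j).card : ℝ) := h2
        _ ≤ (Fintype.card F : ℝ) ^ (γ * (d : ℝ)) *
            ∏ j ∈ Finset.univ.erase i, ((S j).card : ℝ) :=
            mul_le_mul_of_nonneg_right h4 hprodpos
        _ = (Fintype.card F : ℝ) ^ ((2 * γ - 1) * (d : ℝ)) *
            ((Fintype.card F : ℝ) ^ ((1 - γ) * (d : ℝ)) *
              ∏ j ∈ Finset.univ.erase i, ((S j).card : ℝ)) := by rw [h5]; ring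
        _ ≤ (Fintype.card F : ℝ) ^ ((2 * γ - 1) * (d : ℝ)) *
            (((S i).card : ℝ) * ∏ j ∈ Finset.univ.erase i, ((S j).card : ℝ)) := by
            apply mul_le_mul_of_nonneg_left _ hb.le
            exact mul_le_mul_of_nonneg_right h6 hprodpos
    rwa [Finset.mul_prod_erase Finset.univ (fun j => ((S j).card : ℝ))
      (Finset.mem_univ i)] at h7
  -- sum bound
  have hrle : (r : ℝ) ≤ γ * d := by
    have h1 := hs ⟨0, ht1⟩
    have h2 : (0 : ℝ) ≤ (s ⟨0, ht1⟩ : ℝ) := Nat.cast_nonneg _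
    linarith
  have htr : (t : ℝ) * (r : ℝ) ≤ γ ^ 3 * (d : ℝ) ^ 3 := by
    have h1 : (0 : ℝ) ≤ (r : ℝ) := Nat.cast_nonneg _
    have h2 : (0 : ℝ) ≤ γ ^ 2 * (d : ℝ) ^ 2 := by positivity
    calc (t : ℝ) * (r : ℝ) ≤ (γ ^ 2 * (d : ℝ) ^ 2) * (γ * d) :=
        mul_le_mul ht hrle h1 h2
      _ = γ ^ 3 * (d : ℝ) ^ 3 := by ring
  have hBadR : (Bad.card : ℝ) ≤
      (γ ^ 3 * (d : ℝ) ^ 3 / (Fintype.card F : ℝ) ^ ((1 - 2 * γ) * (d : ℝ))) *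
        ∏ i, ((S i).card : ℝ) := by
    have hb : (0 : ℝ) < (Fintype.card F : ℝ) ^ ((2 * γ - 1) * (d : ℝ)) :=
      Real.rpow_pos_of_pos hq0 _
    have hinv : (Fintype.card F : ℝ) ^ ((2 * γ - 1) * (d : ℝ))
        = 1 / (Fintype.card F : ℝ) ^ ((1 - 2 * γ) * (d : ℝ)) := by
      have he : (2 * γ - 1) * (d : ℝ) = -((1 - 2 * γ) * (d : ℝ)) := by ring
      rw [he, Real.rpow_neg hq0.le, one_div]
    calc (Bad.card : ℝ) ≤ ((∑ k, ∑ i, (C k i).card : ℕ) : ℝ) := by exact_mod_cast hBadcard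
      _ = ∑ k, ∑ i, ((C k i).card : ℝ) := by push_cast; ring
      _ ≤ ∑ (_ : Fin t), ∑ (_ : Fin r),
          (Fintype.card F : ℝ) ^ ((2 * γ - 1) * (d : ℝ)) * ∏ j, ((S j).card : ℝ) :=
          Finset.sum_le_sum fun k _ => Finset.sum_le_sum fun i _ => hterm k i
      _ = (t : ℝ) * (r : ℝ) *
          ((Fintype.card F : ℝ) ^ ((2 * γ - 1) * (d : ℝ)) * ∏ j, ((S j).card : ℝ)) := by
          simp [Finset.sum_const, Finset.card_univ]; ring
      _ ≤ γ ^ 3 * (d : ℝ) ^ 3 *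
          ((Fintype.card F : ℝ) ^ ((2 * γ - 1) * (d : ℝ)) * ∏ j, ((S j).card : ℝ)) := by
          apply mul_le_mul_of_nonneg_right htr
          positivity
      _ = (γ ^ 3 * (d : ℝ) ^ 3 / (Fintype.card F : ℝ) ^ ((1 - 2 * γ) * (d : ℝ))) *
          ∏ i, ((S i).card : ℝ) := by
          rw [hinv]; ring
  -- assemble
  have hGoodR : (Good.card : ℝ) + (Bad.card : ℝ) = ∏ i, ((S i).card : ℝ) := by
    have := hsplit
    rw [hPcard] at this
    exact_mod_cast this
  linarith [hBadR, hGoodR]
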